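/- Let k be an algebraically closed field of characteristic p > 0. The map π : E_{≥0}(n, k) → Mat(n, k[T])^E sending the group homomorphism ρ = ρ_{N₁,...,N_r} : (Z/pZ)^r → GL(n, k) to the exponential matrix Π_{i=1}^r Exp(T^{p^{i-1}}·N_i) (and the unique homomorphism from the trivial group (Z/pZ)^0 to I_n) is surjective. -/

import Mathlib

open Polynomial

/-- `A(T) ∈ Mat(n, k[T])` is an exponential matrix: `A(T)·A(T') = A(T+T')` in
`Mat(n, k[T,T'])` and `A(0) = I_n`. -/
def IsExpMat {k : Type*} [Field k] {n : ℕ}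
    (A : Matrix (Fin n) (Fin n) (Polynomial k)) : Prop :=
  A.map (fun q => aeval ((C X + X : Polynomial (Polynomial k))) q) =
    A.map (fun q => aeval ((C X : Polynomial (Polynomial k))) q) *
      A.map (fun q => aeval (X : Polynomial (Polynomial k)) q) ∧
  A.map (fun q => q.eval 0) = 1

/-- `Exp(T^m · N) = ∑_{j=0}^{p-1} T^{m j} N^j / j!`. -/
noncomputable def expT (k : Type*) [Field k] (n p m : ℕ)
    (N : Matrix (Fin n) (Fin n) k) : Matrix (Fin n) (Fin n) (Polynomial k) :=
  ∑ j ∈ Finset.range p, (C ((j.factorial : k)⁻¹) * X ^ (m * j)) • ((N ^ j).map C)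

/-- Truncated exponential `Exp(N) = ∑_{i=0}^{p-1} N^i / i!`. -/
noncomputable def matExp (k : Type*) [Field k] (n p : ℕ)
    (N : Matrix (Fin n) (Fin n) k) : Matrix (Fin n) (Fin n) k :=
  ∑ i ∈ Finset.range p, (i.factorial : k)⁻¹ • N ^ i


section AuxLemmas
open Finset

theorem lucas_step {p : ℕ} (hp : p.Prime) (n j : ℕ) :
    ((n.choose j : ZMod p)) =
      ((n % p).choose (j % p) : ℕ) * ((n / p).choose (j / p) : ℕ) := by
  have : Fact p.Prime := ⟨hp⟩
  have h := Choose.choose_modEq_choose_mod_mul_choose_div_nat (p := p) (n := n) (k := j)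
  have := (ZMod.natCast_eq_natCast_iff _ _ _).mpr h
  push_cast at this ⊢
  exact this

theorem lucas_scaled {p : ℕ} (hp : p.Prime) (t a b : ℕ) :
    (((a * p ^ t).choose (b * p ^ t) : ZMod p)) = (a.choose b : ZMod p) := by
  induction t with
  | zero => simp
  | succ t ih =>
    have hpp : 0 < p := hp.pos
    have h1 : a * p ^ (t+1) = (a * p ^ t) * p := by ring
    have h2 : b * p ^ (t+1) = (b * p ^ t) * p := by ring
    rw [h1, h2, lucas_step hp]
    simp [Nat.mul_mod_left, Nat.mul_div_cancel _ hpp, ih]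

theorem lucas_digit {p : ℕ} (hp : p.Prime) {j m : ℕ} (hj : j < p) :
    (((j + m * p).choose j : ZMod p)) = 1 := by
  rw [lucas_step hp]
  rw [Nat.add_mul_mod_self_right, Nat.mod_eq_of_lt hj,
    Nat.add_mul_div_right _ _ hp.pos, Nat.div_eq_of_lt hj]
  simp

theorem lucas_carry {p : ℕ} (hp : p.Prime) {j j' : ℕ} (hj : j < p) (hj' : j' < p)
    (h : p ≤ j + j') : (((j + j').choose j : ZMod p)) = 0 := by
  rw [lucas_step hp]
  have h1 : (j + j') % p = j + j' - p := by
    rw [Nat.mod_eq_sub_mod h, Nat.mod_eq_of_lt (by omega)]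
  rw [h1, Nat.mod_eq_of_lt hj, Nat.choose_eq_zero_of_lt (by omega)]
  simp

theorem cast_of_zmod {k : Type*} [Field k] {p : ℕ} [CharP k p] {a b : ℕ}
    (h : (a : ZMod p) = (b : ZMod p)) : (a : k) = (b : k) := by
  have := congrArg (ZMod.castHom dvd_rfl k) h
  simpa using this

theorem aeval_coeff {k : Type*} [CommRing k] (q : Polynomial k) (a b : ℕ) :
    (((aeval ((C X + X : Polynomial (Polynomial k)))) q).coeff b).coeff a
      = ((a+b).choose a : k) * q.coeff (a+b) := by
  induction q using Polynomial.induction_on' with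
  | add f g hf hg => simp [hf, hg, mul_add]
  | monomial d c =>
    rw [aeval_monomial, add_pow, Finset.mul_sum, finset_sum_coeff]
    have hterm : ∀ e ∈ Finset.range (d + 1),
        (algebraMap k (Polynomial (Polynomial k)) c *
          ((C X : Polynomial (Polynomial k)) ^ e * X ^ (d - e) *
            (d.choose e : Polynomial (Polynomial k)))).coeff b
        = if b = d - e then C (c * (d.choose e : k)) * X ^ e else 0 := by
      intro e _
      have h1 : algebraMap k (Polynomial (Polynomial k)) c *
          ((C X : Polynomial (Polynomial k)) ^ e * X ^ (d - e) *
            (d.choose e : Polynomial (Polynomial k)))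
          = C (C (c * (d.choose e : k)) * X ^ e) * X ^ (d - e) := by
        rw [show (algebraMap k (Polynomial (Polynomial k))) c = C (C c) by
          simp [Polynomial.algebraMap_apply, Polynomial.algebraMap_eq]]
        simp only [map_mul, map_pow, map_natCast]
        ring
      rw [h1, coeff_C_mul, coeff_X_pow, mul_ite, mul_one, mul_zero]
    rw [Finset.sum_congr rfl hterm, finset_sum_coeff]
    simp only [apply_ite (fun q : Polynomial k => q.coeff a), coeff_zero, coeff_C_mul,
      coeff_X_pow, mul_ite, mul_zero, mul_one]
    have hswap : ∀ e ∈ Finset.range (d+1),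
        (if b = d - e then if a = e then c * (d.choose e : k) else 0 else 0)
        = if a = e then (if b = d - e then c * (d.choose e : k) else 0) else 0 := by
      intro e _; split_ifs <;> rfl
    rw [Finset.sum_congr rfl hswap, Finset.sum_ite_eq, coeff_monomial]
    simp only [mem_range]
    split_ifs with h1 h2 h3 h3 <;> try omega
    · subst h3; ring
    · simp
    · simp

theorem psi_mul {k : Type*} [Field k] {p : ℕ} (hp : p.Prime) [CharP k p] {n : ℕ}
    (G : ℕ → Matrix (Fin n) (Fin n) k)
    (hmul : ∀ a b, G a * G b = (((a+b).choose a : ℕ) : k) • G (a+b))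
    (t : ℕ) (c d : k) :
    (∑ j ∈ Finset.range p, c ^ j • G (j * p ^ t)) * (∑ j ∈ Finset.range p, d ^ j • G (j * p ^ t))
      = ∑ j ∈ Finset.range p, (c + d) ^ j • G (j * p ^ t) := by
  rw [Finset.sum_mul_sum, ← Finset.sum_product']
  have hterm : ∀ x ∈ Finset.range p ×ˢ Finset.range p,
      (c ^ x.1 • G (x.1 * p ^ t)) * (d ^ x.2 • G (x.2 * p ^ t))
      = (c ^ x.1 * d ^ x.2 * (((x.1 + x.2).choose x.1 : ℕ) : k)) • G ((x.1 + x.2) * p ^ t) := by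
    intro x hx
    rw [smul_mul_smul_comm, hmul]
    rw [show x.1 * p ^ t + x.2 * p ^ t = (x.1 + x.2) * p ^ t by ring]
    rw [show ((((x.1 + x.2) * p ^ t).choose (x.1 * p ^ t) : ℕ) : k)
        = (((x.1 + x.2).choose x.1 : ℕ) : k) from cast_of_zmod (lucas_scaled hp t _ _)]
    rw [smul_smul]
  rw [Finset.sum_congr rfl hterm]
  rw [← Finset.sum_filter_of_ne (p := fun x => x.1 + x.2 < p)
    (fun x hx hne => by
      by_contra hge
      apply hne
      simp only [mem_product, mem_range] at hx
      rw [show ((((x.1 + x.2)).choose x.1 : ℕ) : k) = ((0 : ℕ) : k) from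
        cast_of_zmod (by rw [lucas_carry hp hx.1 hx.2 (by omega)]; simp)]
      simp)]
  have hrhs : ∀ s ∈ Finset.range p, (c + d) ^ s • G (s * p ^ t)
      = ∑ u ∈ Finset.range (s+1), (c ^ u * d ^ (s - u) * ((s.choose u : ℕ) : k)) • G (s * p ^ t) := by
    intro s _
    rw [add_pow, Finset.sum_smul]
  rw [Finset.sum_congr rfl hrhs, Finset.sum_sigma']
  refine Finset.sum_nbij' (fun x => ⟨x.1 + x.2, x.1⟩) (fun y => (y.2, y.1 - y.2)) ?_ ?_ ?_ ?_ ?_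
  · intro x hx
    simp only [mem_filter, mem_product, mem_range, Finset.mem_sigma] at hx ⊢
    omega
  · intro y hy
    simp only [mem_filter, mem_product, mem_range, Finset.mem_sigma] at hy ⊢
    omega
  · intro x hx; simp
  · intro y hy
    simp only [Finset.mem_sigma, mem_range] at hy
    ext <;> simp <;> omega
  · intro x hx
    simp only [mem_filter, mem_product, mem_range] at hx
    rw [Nat.add_sub_cancel_left]

theorem prod_expand {k : Type*} [Field k] {p : ℕ} (hp : p.Prime) {n : ℕ}
    (G : ℕ → Matrix (Fin n) (Fin n) k)
    (hG0 : G 0 = 1)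
    (hadd : ∀ s j m, j < p → G (j * p ^ s) * G (m * p ^ (s+1)) = G (j * p ^ s + m * p ^ (s+1))) :
    ∀ r s, (List.ofFn (fun i : Fin r =>
        ∑ j ∈ Finset.range p, (X : Polynomial k) ^ (j * p ^ (s + (i:ℕ)))
          • (G (j * p ^ (s + (i:ℕ)))).map C)).prod
      = ∑ m ∈ Finset.range (p ^ r),
          (X : Polynomial k) ^ (m * p ^ s) • (G (m * p ^ s)).map C := by
  intro r
  induction r with
  | zero =>
    intro s
    simp [hG0]
  | succ r ih =>
    intro s
    rw [List.ofFn_succ, List.prod_cons]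
    have htail : (fun i : Fin r =>
        ∑ j ∈ Finset.range p, (X : Polynomial k) ^ (j * p ^ (s + ((i.succ : Fin (r+1)):ℕ)))
          • (G (j * p ^ (s + ((i.succ : Fin (r+1)):ℕ)))).map C)
        = (fun i : Fin r =>
        ∑ j ∈ Finset.range p, (X : Polynomial k) ^ (j * p ^ ((s+1) + (i:ℕ)))
          • (G (j * p ^ ((s+1) + (i:ℕ)))).map C) := by
      funext i
      have : s + ((i.succ : Fin (r+1)):ℕ) = (s+1) + (i:ℕ) := by
        simp [Fin.val_succ]; omega
      rw [this]

    rw [htail, ih (s+1)]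
    simp only [Fin.val_zero, add_zero]
    rw [Finset.sum_mul_sum, ← Finset.sum_product']
    have hterm : ∀ x ∈ Finset.range p ×ˢ Finset.range (p ^ r),
        ((X : Polynomial k) ^ (x.1 * p ^ s) • (G (x.1 * p ^ s)).map C)
          * ((X : Polynomial k) ^ (x.2 * p ^ (s+1)) • (G (x.2 * p ^ (s+1))).map C)
        = (X : Polynomial k) ^ ((x.1 + x.2 * p) * p ^ s)
          • (G ((x.1 + x.2 * p) * p ^ s)).map C := by
      intro x hx
      simp only [mem_product, mem_range] at hx
      rw [smul_mul_smul_comm, ← Matrix.map_mul, hadd s x.1 x.2 hx.1, ← pow_add]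
      rw [show x.1 * p ^ s + x.2 * p ^ (s+1) = (x.1 + x.2 * p) * p ^ s by ring]
    rw [Finset.sum_congr rfl hterm]
    have hps : p ^ (r+1) = p ^ r * p := by rw [pow_succ]
    have hppos : 0 < p := hp.pos
    refine Finset.sum_nbij' (fun x => x.1 + x.2 * p) (fun m => (m % p, m / p)) ?_ ?_ ?_ ?_ ?_
    · intro x hx
      simp only [mem_product, mem_range] at hx ⊢
      rw [hps]
      rcases hx with ⟨h1, h2⟩
      calc x.1 + x.2 * p < p + x.2 * p := by omega
        _ ≤ p ^ r * p := by nlinarith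
    · intro m hm
      simp only [mem_product, mem_range] at hm ⊢
      constructor
      · exact Nat.mod_lt _ hppos
      · rw [hps, mul_comm] at hm
        exact Nat.div_lt_of_lt_mul hm
    · intro x hx
      simp only [mem_product, mem_range] at hx
      have h1 : (x.1 + x.2 * p) % p = x.1 := by
        rw [Nat.add_mul_mod_self_right, Nat.mod_eq_of_lt hx.1]
      have h2 : (x.1 + x.2 * p) / p = x.2 := by
        rw [Nat.add_mul_div_right _ _ hppos, Nat.div_eq_of_lt hx.1, zero_add]
      simp [h1, h2]
    · intro m hm
      exact Nat.mod_add_div' m p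
    · intro x hx
      rfl

theorem ofFn_one_prod {M : Type*} [Monoid M] (r : ℕ) :
    (List.ofFn (fun _ : Fin r => (1 : M))).prod = 1 := by
  induction r with
  | zero => simp
  | succ r ih => rw [List.ofFn_succ, List.prod_cons]; simpa using ih

theorem ofFn_mul_prod {M : Type*} [Monoid M] {r : ℕ} (f g : Fin r → M)
    (h : ∀ i j, Commute (g i) (f j)) :
    (List.ofFn (fun i => f i * g i)).prod
      = (List.ofFn f).prod * (List.ofFn g).prod := by
  induction r with
  | zero => simp
  | succ r ih =>
    simp only [List.ofFn_succ, List.prod_cons]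
    rw [ih (fun i => f i.succ) (fun i => g i.succ) (fun i j => h _ _)]
    have hc : Commute (g 0) (List.ofFn (fun i : Fin r => f i.succ)).prod := by
      apply Commute.list_prod_right
      intro y hy
      rw [List.mem_ofFn] at hy
      obtain ⟨i, rfl⟩ := hy
      exact h 0 i.succ
    rw [mul_assoc, mul_assoc, ← mul_assoc (g 0), hc.eq, mul_assoc]

theorem pow_mod_of_pow_eq_one {M : Type*} [Monoid M] {x : M} {p : ℕ} (h : x ^ p = 1)
    (m : ℕ) : x ^ m = x ^ (m % p) := by
  conv_lhs => rw [← Nat.mod_add_div m p, pow_add, pow_mul, h, one_pow, mul_one]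

theorem master {k : Type*} [Field k] {p : ℕ} (hp : p.Prime) [CharP k p] {n : ℕ}
    (r : ℕ) (G : ℕ → Matrix (Fin n) (Fin n) k)
    (hG0 : G 0 = 1)
    (hGmul : ∀ a b, G a * G b = (((a+b).choose a : ℕ) : k) • G (a+b)) :
    ∃ (N : Fin r → Matrix (Fin n) (Fin n) k),
      (∀ i, N i ^ p = 0) ∧ (∀ i j, Commute (N i) (N j)) ∧
      (let ρ : (Fin r → ZMod p) → Matrix (Fin n) (Fin n) k :=
        fun a => (List.ofFn (fun i : Fin r => matExp k n p (N i) ^ (a i).val)).prod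
       ρ 0 = 1 ∧ (∀ a b, ρ (a + b) = ρ a * ρ b) ∧ ∀ a, IsUnit (ρ a)) ∧
      (∑ m ∈ Finset.range (p ^ r), (X : Polynomial k) ^ m • (G m).map C
        = (List.ofFn (fun i : Fin r => expT k n p (p ^ (i : ℕ)) (N i))).prod) := by
  haveI : Fact p.Prime := ⟨hp⟩
  haveI : NeZero p := ⟨hp.pos.ne'⟩
  -- commutation
  have hGcomm : ∀ a b, G a * G b = G b * G a := by
    intro a b
    rw [hGmul, hGmul, Nat.add_comm b a]
    congr 2
    rw [← Nat.choose_symm (Nat.le_add_left b a), Nat.add_sub_cancel]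
  -- powers via factorials
  have hGpow : ∀ t j, j < p → G (p ^ t) ^ j = ((j.factorial : ℕ) : k) • G (j * p ^ t) := by
    intro t j
    induction j with
    | zero => intro _; simp [hG0]
    | succ j ih =>
      intro hj
      rw [pow_succ, ih (by omega), smul_mul_assoc, hGmul]
      rw [show j * p ^ t + p ^ t = (j+1) * p ^ t by ring]
      rw [show ((((j+1) * p ^ t).choose (j * p ^ t) : ℕ) : k) = (((j+1).choose j : ℕ) : k) from
        cast_of_zmod (lucas_scaled hp t _ _)]
      rw [smul_smul, Nat.choose_succ_self_right, Nat.factorial_succ]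
      push_cast
      ring_nf
  -- nilpotency
  have hNp : ∀ t, G (p ^ t) ^ p = 0 := by
    intro t
    obtain ⟨q, hq⟩ : ∃ q, p = q + 1 := ⟨p - 1, (Nat.succ_pred_eq_of_pos hp.pos).symm⟩
    have hq1 : p - 1 = q := by omega
    rw [show G (p ^ t) ^ p = G (p ^ t) ^ q * G (p ^ t) by
      rw [← pow_succ, ← hq]]
    rw [hGpow t q (by omega), smul_mul_assoc, hGmul]
    rw [show q * p ^ t + p ^ t = p * p ^ t by rw [hq]; ring]
    rw [show (((p * p ^ t).choose (q * p ^ t) : ℕ) : k) = ((p.choose q : ℕ) : k) from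
      cast_of_zmod (lucas_scaled hp t _ _)]
    have h2 : p.choose q = p := by rw [hq, Nat.choose_succ_self_right]
    rw [h2, CharP.cast_eq_zero k p, zero_smul, smul_zero]
  -- Psi facts
  have hPsiMul := psi_mul hp G hGmul
  have hPsi0 : ∀ t, ∑ j ∈ Finset.range p, (0:k) ^ j • G (j * p ^ t) = 1 := by
    intro t
    rw [Finset.sum_eq_single 0 (fun j _ hj => by rw [zero_pow hj, zero_smul])
      (fun h => absurd (Finset.mem_range.mpr hp.pos) h)]
    simp [hG0]
  have hMatExp : ∀ t, matExp k n p (G (p ^ t))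
      = ∑ j ∈ Finset.range p, (1:k) ^ j • G (j * p ^ t) := by
    intro t
    unfold matExp
    apply Finset.sum_congr rfl
    intro j hj
    rw [hGpow t j (Finset.mem_range.mp hj), smul_smul, one_pow]
    have hne : ((j.factorial : ℕ) : k) ≠ 0 := by
      rw [Ne, CharP.cast_eq_zero_iff k p, hp.dvd_factorial]
      have := Finset.mem_range.mp hj
      omega
    rw [inv_mul_cancel₀ hne, one_smul]
  have hpowE : ∀ t m, matExp k n p (G (p ^ t)) ^ m
      = ∑ j ∈ Finset.range p, ((m:ℕ):k) ^ j • G (j * p ^ t) := by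
    intro t m
    induction m with
    | zero => rw [pow_zero]; push_cast; rw [hPsi0 t]
    | succ m ih =>
      rw [pow_succ, ih, hMatExp t, hPsiMul t]
      push_cast
      ring_nf
      simp_rw [mul_comm (p ^ t)]
  have hEp : ∀ t, matExp k n p (G (p ^ t)) ^ p = 1 := by
    intro t
    rw [hpowE t p, CharP.cast_eq_zero, hPsi0 t]
  -- the N's
  refine ⟨fun i => G (p ^ (i:ℕ)), fun i => hNp _, fun i j => hGcomm _ _, ?_, ?_⟩
  · -- group homomorphism properties
    have hCommE : ∀ (i j : Fin r) (v w : ℕ),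
        Commute (matExp k n p (G (p ^ (i:ℕ))) ^ v) (matExp k n p (G (p ^ (j:ℕ))) ^ w) := by
      intro i j v w
      apply Commute.pow_pow
      rw [hMatExp, hMatExp]
      apply Commute.sum_left
      intro j1 hj1
      apply Commute.sum_right
      intro j2 hj2
      show _ * _ = _ * _
      rw [smul_mul_smul_comm, smul_mul_smul_comm, hGcomm, mul_comm ((1:k)^j1)]
    refine ⟨?_, ?_, ?_⟩
    · show (List.ofFn fun i : Fin r =>
          matExp k n p (G (p ^ (i:ℕ))) ^ ((0 : Fin r → ZMod p) i).val).prod = 1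
      simp only [Pi.zero_apply, ZMod.val_zero, pow_zero]
      exact ofFn_one_prod r
    · intro a b
      have hfn : (fun i : Fin r => matExp k n p (G (p ^ (i:ℕ))) ^ ((a + b) i).val)
          = fun i : Fin r => matExp k n p (G (p ^ (i:ℕ))) ^ (a i).val
              * matExp k n p (G (p ^ (i:ℕ))) ^ (b i).val := by
        funext i
        rw [← pow_add, Pi.add_apply, ZMod.val_add, ← pow_mod_of_pow_eq_one (hEp (i:ℕ))]
      show (List.ofFn fun i : Fin r => matExp k n p (G (p ^ (i:ℕ))) ^ ((a + b) i).val).prod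
          = (List.ofFn fun i : Fin r => matExp k n p (G (p ^ (i:ℕ))) ^ (a i).val).prod
            * (List.ofFn fun i : Fin r => matExp k n p (G (p ^ (i:ℕ))) ^ (b i).val).prod
      rw [hfn]
      exact ofFn_mul_prod _ _ (fun i j => hCommE i j _ _)
    · intro a
      apply List.prod_isUnit
      intro m hm
      rw [List.mem_ofFn] at hm
      obtain ⟨i, rfl⟩ := hm
      exact (IsUnit.of_pow_eq_one (hEp (i:ℕ)) hp.pos.ne').pow _
  · -- product expansion
    show ∑ m ∈ Finset.range (p ^ r), (X : Polynomial k) ^ m • (G m).map C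
        = (List.ofFn (fun i : Fin r => expT k n p (p ^ (i : ℕ)) (G (p ^ (i:ℕ))))).prod
    have hadd : ∀ s j m, j < p →
        G (j * p ^ s) * G (m * p ^ (s+1)) = G (j * p ^ s + m * p ^ (s+1)) := by
      intro s j m hj
      rw [hGmul]
      rw [show j * p ^ s + m * p ^ (s+1) = (j + m * p) * p ^ s by ring]
      rw [show ((((j + m * p) * p ^ s).choose (j * p ^ s) : ℕ) : k) = ((1:ℕ) : k) from
        cast_of_zmod (by rw [lucas_scaled hp s, lucas_digit hp hj]; simp)]
      rw [Nat.cast_one, one_smul]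
    have hexp : ∀ t, expT k n p (p ^ t) (G (p ^ t))
        = ∑ j ∈ Finset.range p, (X : Polynomial k) ^ (j * p ^ t) • (G (j * p ^ t)).map C := by
      intro t
      unfold expT
      apply Finset.sum_congr rfl
      intro j hj
      rw [hGpow t j (Finset.mem_range.mp hj)]
      funext a b
      simp only [Matrix.smul_apply, Matrix.map_apply, smul_eq_mul, Matrix.smul_apply,
        smul_eq_mul, map_mul]
      have hne : ((j.factorial : ℕ) : k) ≠ 0 := by
        rw [Ne, CharP.cast_eq_zero_iff k p, hp.dvd_factorial]
        have := Finset.mem_range.mp hj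
        omega
      have h1 : (C ((j.factorial:k)⁻¹) : Polynomial k) * C ((j.factorial:ℕ):k) = 1 := by
        rw [← map_mul, inv_mul_cancel₀ hne, map_one]
      calc C ((j.factorial:k)⁻¹) * X ^ (p ^ t * j) * (C (((j.factorial:ℕ):k)) * C (G (j * p ^ t) a b))
            = (C ((j.factorial:k)⁻¹) * C (((j.factorial:ℕ):k))) * (X ^ (p ^ t * j) * C (G (j * p ^ t) a b)) := by ring
        _ = X ^ (j * p ^ t) * C (G (j * p ^ t) a b) := by rw [h1, one_mul, mul_comm (p^t) j]
    have hprod := prod_expand hp G hG0 hadd r 0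
    simp only [zero_add, pow_zero, mul_one] at hprod
    rw [show (fun i : Fin r => expT k n p (p ^ (i:ℕ)) (G (p ^ (i:ℕ))))
        = (fun i : Fin r => ∑ j ∈ Finset.range p,
            (X : Polynomial k) ^ (j * p ^ (i:ℕ)) • (G (j * p ^ (i:ℕ))).map C) from
      funext fun i => hexp (i:ℕ)]
    exact hprod.symm

end AuxLemmas

/-- The map `π : E_{≥0}(n, k) → Mat(n, k[T])^E`, sending
`ρ_{N₁,…,N_r} : (ℤ/pℤ)^r → GL(n, k)` to `∏_{i=1}^r Exp(T^{p^{i-1}} N_i)`, is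
surjective: every exponential matrix arises from some group homomorphism
`(ℤ/pℤ)^r → GL(n, k)`. -/
theorem stmt_16 {k : Type*} [Field k] [IsAlgClosed k] {p : ℕ} (hp : p.Prime)
    [CharP k p] {n : ℕ}
    (A : Matrix (Fin n) (Fin n) (Polynomial k)) (hA : IsExpMat A) :
    ∃ (r : ℕ) (N : Fin r → Matrix (Fin n) (Fin n) k),
      (∀ i, N i ^ p = 0) ∧ (∀ i j, Commute (N i) (N j)) ∧
      -- the corresponding ρ_{N₁,…,N_r} is a group homomorphism (ℤ/pℤ)^r → GL(n, k)
      (let ρ : (Fin r → ZMod p) → Matrix (Fin n) (Fin n) k :=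
        fun a => (List.ofFn (fun i : Fin r => matExp k n p (N i) ^ (a i).val)).prod
       ρ 0 = 1 ∧ (∀ a b, ρ (a + b) = ρ a * ρ b) ∧ ∀ a, IsUnit (ρ a)) ∧
      -- and π(ρ) = A
      A = (List.ofFn (fun i : Fin r => expT k n p (p ^ (i : ℕ)) (N i))).prod := by
  obtain ⟨h1, h2⟩ := hA
  have haevalC : ∀ q : Polynomial k, aeval (C X : Polynomial (Polynomial k)) q = C q := by
    intro q
    induction q using Polynomial.induction_on' with
    | add f g hf hg => simp [hf, hg]
    | monomial d c =>
      rw [aeval_monomial, ← C_mul_X_pow_eq_monomial, map_mul, map_pow]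
      rw [show (algebraMap k (Polynomial (Polynomial k))) c = C (C c) by
        simp [Polynomial.algebraMap_apply, Polynomial.algebraMap_eq]]
  have haevalX : ∀ q : Polynomial k, aeval (X : Polynomial (Polynomial k)) q = q.map C := by
    intro q
    induction q using Polynomial.induction_on' with
    | add f g hf hg => simp [hf, hg]
    | monomial d c =>
      rw [aeval_monomial, map_monomial, ← C_mul_X_pow_eq_monomial]
      rw [show (algebraMap k (Polynomial (Polynomial k))) c = C (C c) by
        simp [Polynomial.algebraMap_apply, Polynomial.algebraMap_eq]]
  have key : ∀ i j : Fin n, aeval (C X + X : Polynomial (Polynomial k)) (A i j)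
      = ∑ l, C (A i l) * (A l j).map C := by
    intro i j
    have h := congrFun (congrFun h1 i) j
    simpa [Matrix.map_apply, Matrix.mul_apply, haevalC, haevalX] using h
  have hG0 : (fun d : ℕ => A.map (fun q => q.coeff d)) 0 = 1 := by
    show A.map (fun q => q.coeff 0) = 1
    rw [show (fun q : Polynomial k => q.coeff 0) = (fun q : Polynomial k => q.eval 0) from
      funext fun q => coeff_zero_eq_eval_zero q]
    exact h2
  have hGmul : ∀ a b, (fun d : ℕ => A.map (fun q => q.coeff d)) a
        * (fun d : ℕ => A.map (fun q => q.coeff d)) b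
      = (((a+b).choose a : ℕ) : k) • (fun d : ℕ => A.map (fun q => q.coeff d)) (a+b) := by
    intro a b
    funext i j
    have h := congrArg (fun q : Polynomial (Polynomial k) => (q.coeff b).coeff a) (key i j)
    simp only [aeval_coeff, finset_sum_coeff, coeff_C_mul, coeff_map, coeff_mul_C] at h
    show (Matrix.map A (fun q => q.coeff a) * Matrix.map A (fun q => q.coeff b)) i j = _
    simp only [Matrix.mul_apply, Matrix.smul_apply, Matrix.map_apply, smul_eq_mul]
    exact h.symm
  set D := Finset.univ.sup (fun ij : Fin n × Fin n => (A ij.1 ij.2).natDegree) with hD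
  have hdeg : ∀ i j, (A i j).natDegree < p ^ (D + 1) := by
    intro i j
    have ha : (A i j).natDegree ≤ D := Finset.le_sup (f := fun ij : Fin n × Fin n =>
      (A ij.1 ij.2).natDegree) (Finset.mem_univ (i, j))
    have hb : D < 2 ^ (D+1) :=
      (Nat.lt_two_pow_self (n := D)).trans_le (Nat.pow_le_pow_right (by norm_num) (Nat.le_succ D))
    have hc : D < p ^ (D+1) := hb.trans_le (Nat.pow_le_pow_left hp.two_le _)
    omega
  obtain ⟨N, hN1, hN2, hN3, hN4⟩ :=
    master hp (D+1) (fun d : ℕ => A.map (fun q => q.coeff d)) hG0 hGmul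
  refine ⟨D+1, N, hN1, hN2, hN3, ?_⟩
  rw [← hN4]
  funext i j
  apply Polynomial.ext
  intro d
  simp only [Matrix.sum_apply, Matrix.smul_apply, Matrix.map_apply, smul_eq_mul, finset_sum_coeff, coeff_mul_C,
    coeff_X_pow, ite_mul, one_mul, zero_mul]
  rw [Finset.sum_ite_eq]
  simp only [Finset.mem_range]
  split_ifs with hd
  · rfl
  · exact coeff_eq_zero_of_natDegree_lt (by have := hdeg i j; omega)
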